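/- (Push preserves the push-relabel invariants.) Let x be a preflow, d a labeling valid with respect to x, and (i,j) a pair of distinct nodes with e_x(i) > 0, r_{ij}(x) > 0, and d(i) = d(j) + 1 (an admissible arc). Let 0 < δ ≤ min{e_x(i), r_{ij}(x)}, and let x' agree with x everywhere except x'(j,i) = x(j,i) − min{δ, x(j,i)} and x'(i,j) = x(i,j) + (δ − min{δ, x(j,i)}). Then: (1) x' is a preflow; (2) e_{x'}(i) = e_x(i) − δ, e_{x'}(j) = e_x(j) + δ, and e_{x'}(v) = e_x(v) for every other node v; (3) r_{ij}(x') = r_{ij}(x) − δ, r_{ji}(x') = r_{ji}(x) + δ, and all other residual capacities are unchanged; (4) d is valid with respect to x'. -/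
import Mathlib


open Finset

variable {V : Type*}

/-- The excess of node `v` under `x`: total inflow minus total outflow. -/
def excess [Fintype V] (x : V → V → ℝ) (v : V) : ℝ :=
  (∑ j, x j v) - ∑ j, x v j

/-- `x` is capacity-feasible for capacities `u`: `0 ≤ x i j ≤ u i j` on distinct pairs. -/
def IsCapFeasible (u x : V → V → ℝ) : Prop :=
  ∀ i j, i ≠ j → 0 ≤ x i j ∧ x i j ≤ u i j

/-- A preflow: capacity-feasible with nonnegative excess at every node other than `s`. -/
def IsPreflow [Fintype V] (u : V → V → ℝ) (s : V) (x : V → V → ℝ) : Prop :=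
  IsCapFeasible u x ∧ ∀ v, v ≠ s → 0 ≤ excess x v

/-- A flow: capacity-feasible with zero excess at every node other than `s` and `t`. -/
def IsFlow [Fintype V] (u : V → V → ℝ) (s t : V) (x : V → V → ℝ) : Prop :=
  IsCapFeasible u x ∧ ∀ v, v ≠ s → v ≠ t → excess x v = 0

/-- Residual capacity of the pair `(i,j)` with respect to `x`. -/
def res (u x : V → V → ℝ) (i j : V) : ℝ := u i j + x j i - x i j

/-- A labeling `d` is valid w.r.t. `x`: `d t = 0` and `d i ≤ d j + 1` across residual arcs. -/
def IsValidLabeling [Fintype V] (u x : V → V → ℝ) (t : V) (d : V → ℕ) : Prop :=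
  d t = 0 ∧ ∀ i j, i ≠ j → 0 < res u x i j → d i ≤ d j + 1

/-- A push on an admissible arc preserves the push-relabel invariants, changes the
excesses of `i` and `j` by `∓δ`/`±δ`, and changes only the residual capacities of
`(i,j)` and `(j,i)`, by `∓δ`/`±δ`. -/
theorem push_preserves_invariants [Fintype V] (s t : V) (hst : s ≠ t)
    (u : V → V → ℝ) (hu : ∀ i j, i ≠ j → 0 ≤ u i j)
    (x : V → V → ℝ) (hx : IsPreflow u s x)
    (d : V → ℕ) (hd : IsValidLabeling u x t d)
    (i j : V) (hij : i ≠ j)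
    (hei : 0 < excess x i) (hrij : 0 < res u x i j) (hadm : d i = d j + 1)
    (δ : ℝ) (hδpos : 0 < δ) (hδle : δ ≤ min (excess x i) (res u x i j))
    (x' : V → V → ℝ)
    (h'ji : x' j i = x j i - min δ (x j i))
    (h'ij : x' i j = x i j + (δ - min δ (x j i)))
    (h'other : ∀ a b : V, ¬(a = j ∧ b = i) → ¬(a = i ∧ b = j) → x' a b = x a b) :
    IsPreflow u s x' ∧
    (excess x' i = excess x i - δ ∧ excess x' j = excess x j + δ ∧
      ∀ v, v ≠ i → v ≠ j → excess x' v = excess x v) ∧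
    (res u x' i j = res u x i j - δ ∧ res u x' j i = res u x j i + δ ∧
      ∀ a b : V, ¬(a = i ∧ b = j) → ¬(a = j ∧ b = i) → res u x' a b = res u x a b) ∧
    IsValidLabeling u x' t d := by
  classical
  set m : ℝ := min δ (x j i) with hm
  have hδe : δ ≤ excess x i := le_trans hδle (min_le_left _ _)
  have hδr : δ ≤ res u x i j := le_trans hδle (min_le_right _ _)
  have hxji0 : 0 ≤ x j i := (hx.1 j i hij.symm).1
  have hmδ : m ≤ δ := min_le_left _ _
  have hmx : m ≤ x j i := min_le_right _ _
  have hm0 : 0 ≤ m := le_min hδpos.le hxji0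
  -- pointwise description of x'
  have hxval : ∀ a b, x' a b = x a b +
      ((if a = i ∧ b = j then δ - m else 0) + (if a = j ∧ b = i then -m else 0)) := by
    intro a b
    by_cases h1 : a = i ∧ b = j
    · obtain ⟨rfl, rfl⟩ := h1
      have hne : ¬ (a = b ∧ b = a) := fun h => hij h.1
      simp [h'ij, hne]
    · by_cases h2 : a = j ∧ b = i
      · obtain ⟨rfl, rfl⟩ := h2
        have hne : ¬ (a = b ∧ b = a) := fun h => hij h.2
        rw [h'ji, if_neg hne, if_pos (⟨rfl, rfl⟩ : a = a ∧ b = b)]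
        ring
      · rw [h'other a b h2 h1]
        simp [h1, h2]
  have sum1 : ∀ (a : V) (P : Prop) [Decidable P] (c : ℝ),
      ∑ k : V, (if k = a ∧ P then c else 0) = if P then c else 0 := by
    intro a P _ c
    by_cases h : P <;> simp [h, Finset.sum_ite_eq']
  have sum2 : ∀ (b : V) (P : Prop) [Decidable P] (c : ℝ),
      ∑ k : V, (if P ∧ k = b then c else 0) = if P then c else 0 := by
    intro b P _ c
    by_cases h : P <;> simp [h, Finset.sum_ite_eq']
  have hexc : ∀ v, excess x' v = excess x v +
      (((if v = j then δ - m else 0) + (if v = i then -m else 0)) -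
       ((if v = i then δ - m else 0) + (if v = j then -m else 0))) := by
    intro v
    simp only [excess, hxval, Finset.sum_add_distrib, sum1, sum2]
    ring
  have hexi : excess x' i = excess x i - δ := by
    rw [hexc i]; simp [hij]; ring
  have hexj : excess x' j = excess x j + δ := by
    rw [hexc j]; simp [hij.symm]
  have hexo : ∀ v, v ≠ i → v ≠ j → excess x' v = excess x v := by
    intro v hvi hvj
    rw [hexc v]; simp [hvi, hvj]
  -- feasibility
  have hfeas : IsCapFeasible u x' := by
    intro a b hab
    by_cases h1 : a = i ∧ b = j
    · obtain ⟨rfl, rfl⟩ := h1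
      rw [h'ij]
      have hub : δ - m ≤ u a b - x a b := by
        rcases le_total δ (x b a) with h | h
        · rw [hm, min_eq_left h]
          have := (hx.1 a b hij).2
          linarith
        · rw [hm, min_eq_right h]
          simp only [res] at hδr
          linarith
      have hlo := (hx.1 a b hij).1
      constructor <;> linarith
    · by_cases h2 : a = j ∧ b = i
      · obtain ⟨rfl, rfl⟩ := h2
        rw [h'ji]
        have := (hx.1 a b hij.symm).2
        constructor <;> linarith
      · rw [h'other a b h2 h1]; exact hx.1 a b hab
  -- residuals
  have hres1 : res u x' i j = res u x i j - δ := by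
    simp only [res, h'ij, h'ji]; ring
  have hres2 : res u x' j i = res u x j i + δ := by
    simp only [res, h'ij, h'ji]; ring
  have hreso : ∀ a b : V, ¬(a = i ∧ b = j) → ¬(a = j ∧ b = i) →
      res u x' a b = res u x a b := by
    intro a b h1 h2
    have hba1 : ¬(b = j ∧ a = i) := fun h => h1 ⟨h.2, h.1⟩
    have hba2 : ¬(b = i ∧ a = j) := fun h => h2 ⟨h.2, h.1⟩
    simp only [res, h'other a b h2 h1, h'other b a hba1 hba2]
  refine ⟨⟨hfeas, ?_⟩, ⟨hexi, hexj, hexo⟩, ⟨hres1, hres2, hreso⟩, hd.1, ?_⟩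
  · intro v hvs
    by_cases hvi : v = i
    · subst hvi; rw [hexi]; linarith
    · by_cases hvj : v = j
      · subst hvj; rw [hexj]
        have := hx.2 v hvs
        linarith
      · rw [hexo v hvi hvj]; exact hx.2 v hvs
  · intro a b hab hr
    by_cases h1 : a = i ∧ b = j
    · obtain ⟨rfl, rfl⟩ := h1; omega
    · by_cases h2 : a = j ∧ b = i
      · obtain ⟨rfl, rfl⟩ := h2; omega
      · exact hd.2 a b hab (by rwa [hreso a b h1 h2] at hr)
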